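/- Consider the single-queue setting: λ ∈ [0,1), ε ∈ (0,1], service rates μ_k for servers k, with μ* = max_k μ_k = λ + ε. Let Q(t) be the queue length under a policy with Q(1) = 0 and Q(t+1) = Q(t) − S_{J(t)}(t) + A(t), where A(t) is Bernoulli(λ), S_{J(t)}(t) is Bernoulli(μ_{J(t)}) given the choice J(t) (with μ_⊥ = 0 when the queue is empty), and arrivals and services in period t are independent of the history. Define the satisficing regret SaR(T) = ∑_{t=1}^T (μ* − μ_{J(t)} − ε/2)⁺·1{Q(t) ≥ 1}. Then for every T ≥ 1, (1/T)·∑_{t=1}^T E[Q(t)] ≤ 4/ε + (8/ε²)·E[SaR(T)²]/T. -/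

import Mathlib

open MeasureTheory

lemma aux_sum_lb (f : ℕ → ℝ) (hdec : ∀ t, 1 ≤ t → f (t + 1) - 1 ≤ f t)
    (hnn : ∀ t, 1 ≤ t → 0 ≤ f t) :
    ∀ m s : ℕ, 1 ≤ s → m ≤ s → (m : ℝ) ≤ f s →
      (m : ℝ) * (m + 1) / 2 ≤ ∑ t ∈ Finset.Icc 1 s, f t := by
  intro m
  induction m with
  | zero =>
    intro s hs _ _
    simpa using Finset.sum_nonneg fun t ht => hnn t (Finset.mem_Icc.mp ht).1
  | succ m ih =>
    intro s hs hms hfs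
    rcases eq_or_lt_of_le hs with h1 | h2
    · have hs1 : s = 1 := h1.symm
      subst hs1
      have hm0 : m = 0 := by omega
      subst hm0
      have : ∑ t ∈ Finset.Icc 1 1, f t = f 1 := by simp
      rw [this]
      push_cast at hfs ⊢
      linarith
    · have hs1 : 1 ≤ s - 1 := by omega
      have hss : s - 1 + 1 = s := by omega
      have hfd : (m : ℝ) ≤ f (s - 1) := by
        have h := hdec (s - 1) hs1
        rw [hss] at h
        push_cast at hfs
        linarith
      have h := ih (s - 1) hs1 (by omega) hfd
      have hsplit : ∑ t ∈ Finset.Icc 1 s, f t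
          = ∑ t ∈ Finset.Icc 1 (s - 1), f t + f s := by
        conv_lhs => rw [← hss]
        rw [Finset.sum_Icc_succ_top (by omega)]
        rw [hss]
      rw [hsplit]
      push_cast at hfs ⊢
      linarith

lemma final_arith (ε T S R : ℝ) (hε0 : 0 < ε) (hT0 : 0 < T) (hRnn : 0 ≤ R)
    (hST : ε / 2 * S ≤ T + 4 / ε * R) :
    1 / T * S ≤ 4 / ε + 8 / ε ^ 2 * R / T := by
  have h1 : S ≤ 2 / ε * T + 8 / ε ^ 2 * R := by
    have h := mul_le_mul_of_nonneg_left hST (by positivity : (0 : ℝ) ≤ 2 / ε)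
    have e1 : 2 / ε * (ε / 2 * S) = S := by
      field_simp
    have e2 : 2 / ε * (T + 4 / ε * R) = 2 / ε * T + 8 / ε ^ 2 * R := by
      field_simp
      ring
    rw [e1, e2] at h
    exact h
  have h2 : 1 / T * S ≤ 1 / T * (2 / ε * T + 8 / ε ^ 2 * R) :=
    mul_le_mul_of_nonneg_left h1 (by positivity)
  have e3 : 1 / T * (2 / ε * T + 8 / ε ^ 2 * R) = 2 / ε + 8 / ε ^ 2 * R / T := by
    field_simp
  rw [e3] at h2
  have e4 : 2 / ε ≤ 4 / ε := by gcongr <;> norm_num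
  linarith

/-- Regenerate-stage bound for the single-queue multi-server system: for any non-anticipatory
policy, the time-averaged expected queue length is at most `4/ε + (8/ε²)·E[SaR(T)²]/T`,
where `SaR(T) = ∑_{t≤T} (μ* − μ_{J(t)} − ε/2)⁺ 1{Q(t) ≥ 1}` is the satisficing regret.
The system has `K` servers with rates `μs k ∈ [0,1]`, `μ* = max_k μs k = λ + ε`; the policy
`J t` (with `none` denoting the null server of rate 0, chosen when the queue is empty) is
`ℱ t`-measurable via its rate, the queue is adapted, and arrivals/services in period `t` have
conditional means `λ` and `μ_{J(t)}` given the history `ℱ t`. -/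
theorem stmt_14 {Ω : Type*} {m0 : MeasurableSpace Ω} (μ : Measure Ω) [IsProbabilityMeasure μ]
    (ℱ : Filtration ℕ m0)
    (K : ℕ) (hK : 1 ≤ K)
    (lam ε : ℝ) (hlam0 : 0 ≤ lam) (hlam1 : lam < 1) (hε : ε ∈ Set.Ioc (0 : ℝ) 1)
    (μs : Fin K → ℝ) (hμs0 : ∀ k, 0 ≤ μs k) (hμs1 : ∀ k, μs k ≤ 1)
    (hmaxle : ∀ k, μs k ≤ lam + ε) (hmaxex : ∃ k, μs k = lam + ε)
    (J : ℕ → Ω → Option (Fin K))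
    (A Serv : ℕ → Ω → ℝ) (Q : ℕ → Ω → ℝ)
    (hQ1 : ∀ ω, Q 1 ω = 0)
    (hQdyn : ∀ t ω, Q (t + 1) ω = Q t ω - Serv t ω + A t ω)
    (hQad : Adapted ℱ Q)
    (hJad : ∀ t, Measurable[ℱ t] (fun ω => (J t ω).elim 0 μs))
    (hJempty : ∀ t ω, Q t ω = 0 → J t ω = none)
    (hA01 : ∀ t, ∀ᵐ ω ∂μ, A t ω = 0 ∨ A t ω = 1)
    (hS01 : ∀ t, ∀ᵐ ω ∂μ, Serv t ω = 0 ∨ Serv t ω = 1)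
    (hAmeas : ∀ t, Measurable (A t)) (hSmeas : ∀ t, Measurable (Serv t))
    (hAcond : ∀ t, μ[A t | ℱ t] =ᵐ[μ] fun _ => lam)
    (hScond : ∀ t, μ[Serv t | ℱ t] =ᵐ[μ] fun ω => (J t ω).elim 0 μs)
    (T : ℕ) (hT : 1 ≤ T) :
    (1 / (T : ℝ)) * ∑ t ∈ Finset.Icc 1 T, ∫ ω, Q t ω ∂μ
      ≤ 4 / ε + (8 / ε ^ 2) *
        (∫ ω, (∑ t ∈ Finset.Icc 1 T,
          max (lam + ε - (J t ω).elim 0 μs - ε / 2) 0 *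
            (if 1 ≤ Q t ω then (1 : ℝ) else 0)) ^ 2 ∂μ) / T := by
  have hε0 : (0 : ℝ) < ε := hε.1
  have hle : ∀ t, ℱ t ≤ m0 := fun t => ℱ.le t
  -- basic integrability helper
  have hint : ∀ (f : Ω → ℝ) (C : ℝ), Measurable f → (∀ᵐ ω ∂μ, |f ω| ≤ C) →
      Integrable f μ := fun f C hm hb =>
    ⟨hm.aestronglyMeasurable,
      HasFiniteIntegral.of_bounded (C := C) (by simpa [Real.norm_eq_abs] using hb)⟩
  -- tower / pull-out lemma
  have pull : ∀ (t : ℕ) (C : ℝ) (X Y h : Ω → ℝ), StronglyMeasurable[ℱ t] X →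
      (∀ᵐ ω ∂μ, |X ω| ≤ C) → Measurable Y → (∀ᵐ ω ∂μ, |Y ω| ≤ 1) →
      μ[Y | ℱ t] =ᵐ[μ] h →
      ∫ ω, X ω * Y ω ∂μ = ∫ ω, X ω * h ω ∂μ := by
    intro t C X Y h hXm hXb hYm hYb hYc
    have hYint : Integrable Y μ := hint Y 1 hYm hYb
    have hXm0 : Measurable X := (hXm.mono (hle t)).measurable
    have hXY : Integrable (X * Y) μ := by
      refine hint _ (C * 1) (hXm0.mul hYm) ?_
      filter_upwards [hXb, hYb] with ω h1 h2
      rw [Pi.mul_apply, abs_mul]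
      exact mul_le_mul h1 h2 (abs_nonneg _) ((abs_nonneg _).trans h1)
    have h2 := condExp_mul_of_stronglyMeasurable_left hXm hXY hYint
    calc ∫ ω, X ω * Y ω ∂μ = ∫ ω, (X * Y) ω ∂μ := rfl
      _ = ∫ ω, (μ[X * Y | ℱ t]) ω ∂μ := (integral_condExp (hle t)).symm
      _ = ∫ ω, X ω * h ω ∂μ := by
          refine integral_congr_ae ?_
          filter_upwards [h2, hYc] with ω e1 e2
          rw [e1, Pi.mul_apply, e2]
  have hSb : ∀ t, ∀ᵐ ω ∂μ, |Serv t ω| ≤ 1 := by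
    intro t; filter_upwards [hS01 t] with ω h; rcases h with h | h <;> simp [h]
  have hAb : ∀ t, ∀ᵐ ω ∂μ, |A t ω| ≤ 1 := by
    intro t; filter_upwards [hA01 t] with ω h; rcases h with h | h <;> simp [h]
  -- no service when queue is empty
  have hS0 : ∀ t, ∀ᵐ ω ∂μ, Q t ω = 0 → Serv t ω = 0 := by
    intro t
    set X : Ω → ℝ := fun ω => if Q t ω = 0 then 1 else 0 with hX
    have hXm : StronglyMeasurable[ℱ t] X := by
      refine (Measurable.ite ?_ measurable_const measurable_const).stronglyMeasurable
      have : MeasurableSet[ℱ t] (Q t ⁻¹' {0}) := (hQad t) (measurableSet_singleton 0)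
      simpa [Set.preimage, Set.mem_singleton_iff] using this
    have hXb : ∀ᵐ ω ∂μ, |X ω| ≤ 1 := by
      refine Filter.Eventually.of_forall fun ω => ?_
      by_cases h : Q t ω = 0 <;> simp [hX, h]
    have heq : ∫ ω, X ω * Serv t ω ∂μ = ∫ ω, X ω * (J t ω).elim 0 μs ∂μ :=
      pull t 1 X (Serv t) _ hXm hXb (hSmeas t) (hSb t) (hScond t)
    have hzero : ∫ ω, X ω * (J t ω).elim 0 μs ∂μ = 0 := by
      have hz : ∀ ω, X ω * (J t ω).elim 0 μs = 0 := by
        intro ω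
        by_cases h : Q t ω = 0
        · rw [hJempty t ω h]; simp
        · simp [hX, h]
      simp [hz]
    have hnn : 0 ≤ᵐ[μ] fun ω => X ω * Serv t ω := by
      filter_upwards [hS01 t] with ω hs
      rcases hs with h | h <;> by_cases hq : Q t ω = 0 <;> simp [hX, h, hq]
    have hXSint : Integrable (fun ω => X ω * Serv t ω) μ := by
      refine hint _ 1 (((hXm.mono (hle t)).measurable).mul (hSmeas t)) ?_
      filter_upwards [hXb, hSb t] with ω h1 h2
      rw [abs_mul]
      calc |X ω| * |Serv t ω| ≤ 1 * 1 := mul_le_mul h1 h2 (abs_nonneg _) zero_le_one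
        _ = 1 := by norm_num
    have hae := (integral_eq_zero_iff_of_nonneg_ae hnn hXSint).mp (heq.trans hzero)
    filter_upwards [hae] with ω h hq
    have : X ω = 1 := by simp [hX, hq]
    simpa [this] using h
  -- the good event
  have hgood : ∀ᵐ ω ∂μ, ∀ t, (A t ω = 0 ∨ A t ω = 1) ∧ (Serv t ω = 0 ∨ Serv t ω = 1)
      ∧ (Q t ω = 0 → Serv t ω = 0) := by
    rw [MeasureTheory.ae_all_iff]
    intro t
    filter_upwards [hA01 t, hS01 t, hS0 t] with ω h1 h2 h3 using ⟨h1, h2, h3⟩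
  -- queue is a.s. ℕ-valued and at most t - 1
  have hnat : ∀ᵐ ω ∂μ, ∀ t, 1 ≤ t → ∃ n : ℕ, Q t ω = n ∧ (n : ℝ) ≤ (t : ℝ) - 1 := by
    filter_upwards [hgood] with ω hg
    intro t
    induction t with
    | zero => intro h; exact absurd h (by omega)
    | succ t ih =>
      intro _
      rcases Nat.eq_zero_or_pos t with h0 | h1
      · subst h0
        exact ⟨0, by simpa using hQ1 ω, by norm_num⟩
      · obtain ⟨n, hn, hb⟩ := ih h1
        obtain ⟨hA', hS', h0'⟩ := hg t
        have ht1 : (1 : ℝ) ≤ (t : ℝ) := by exact_mod_cast h1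
        rcases n with _ | m
        · have hq0 : Q t ω = 0 := by simpa using hn
          have hs0 : Serv t ω = 0 := h0' hq0
          rcases hA' with ha | ha
          · exact ⟨0, by rw [hQdyn, hq0, hs0, ha]; norm_num, by push_cast; linarith⟩
          · exact ⟨1, by rw [hQdyn, hq0, hs0, ha]; norm_num, by push_cast; linarith⟩
        · push_cast at hb
          rcases hA' with ha | ha <;> rcases hS' with hs | hs
          · exact ⟨m + 1, by rw [hQdyn, hn, ha, hs]; push_cast; ring,
              by push_cast; linarith⟩
          · exact ⟨m, by rw [hQdyn, hn, ha, hs]; push_cast; ring,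
              by push_cast; linarith⟩
          · exact ⟨m + 2, by rw [hQdyn, hn, ha, hs]; push_cast; ring,
              by push_cast; linarith⟩
          · exact ⟨m + 1, by rw [hQdyn, hn, ha, hs]; push_cast; ring,
              by push_cast; linarith⟩
  have hinc : ∀ᵐ ω ∂μ, ∀ t, Q (t + 1) ω ≤ Q t ω + 1 := by
    filter_upwards [hgood] with ω hg t
    obtain ⟨hA', hS', -⟩ := hg t
    rw [hQdyn]
    rcases hA' with h | h <;> rcases hS' with h' | h' <;> rw [h, h'] <;> linarith
  -- measurability
  have hQm : ∀ t, Measurable (Q t) := fun t => (hQad t).mono (hle t) le_rfl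
  have hgm : ∀ t, Measurable fun ω => (J t ω).elim 0 μs := fun t => (hJad t).mono (hle t) le_rfl
  set G : ℕ → Ω → ℝ := fun t ω => max (lam + ε - (J t ω).elim 0 μs - ε / 2) 0 *
      (if 1 ≤ Q t ω then (1 : ℝ) else 0) with hGdef
  have hGm : ∀ t, Measurable (G t) := by
    intro t
    apply Measurable.mul
    · exact ((measurable_const.sub (hgm t)).sub measurable_const).max measurable_const
    · exact Measurable.ite (measurableSet_le measurable_const (hQm t))
        measurable_const measurable_const
  have hg0 : ∀ t ω, 0 ≤ (J t ω).elim 0 μs := by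
    intro t ω; cases h : J t ω with
    | none => simp
    | some k => simpa using hμs0 k
  have hG0 : ∀ t ω, 0 ≤ G t ω := by
    intro t ω
    exact mul_nonneg (le_max_right _ _) (by split_ifs <;> norm_num)
  have hGb : ∀ t ω, G t ω ≤ 2 := by
    intro t ω
    have h1 : max (lam + ε - (J t ω).elim 0 μs - ε / 2) 0 ≤ 2 := by
      apply max_le
      · have := hg0 t ω; linarith [hε.2]
      · norm_num
    have h2 : (if 1 ≤ Q t ω then (1 : ℝ) else 0) ≤ 1 := by split_ifs <;> norm_num
    calc G t ω ≤ max (lam + ε - (J t ω).elim 0 μs - ε / 2) 0 * 1 :=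
          mul_le_mul_of_nonneg_left h2 (le_max_right _ _)
      _ = max (lam + ε - (J t ω).elim 0 μs - ε / 2) 0 := mul_one _
      _ ≤ 2 := h1
  -- integrability of the queue
  have hQb : ∀ t, 1 ≤ t → ∀ᵐ ω ∂μ, |Q t ω| ≤ (t : ℝ) := by
    intro t ht
    filter_upwards [hnat] with ω h
    obtain ⟨n, hn, hb⟩ := h t ht
    rw [hn, abs_of_nonneg (Nat.cast_nonneg n)]
    linarith
  have hQint : ∀ t, 1 ≤ t → Integrable (Q t) μ := fun t ht => hint _ _ (hQm t) (hQb t ht)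
  have hQGi : ∀ t, 1 ≤ t → Integrable (fun ω => Q t ω * G t ω) μ := by
    intro t ht
    refine hint _ ((t : ℝ) * 2) ((hQm t).mul (hGm t)) ?_
    filter_upwards [hQb t ht] with ω h
    rw [abs_mul]
    refine mul_le_mul h ?_ (abs_nonneg _) (by positivity)
    rw [abs_of_nonneg (hG0 t ω)]
    exact hGb t ω
  -- the drift step
  have step : ∀ t, 1 ≤ t →
      ∫ ω, (Q (t + 1) ω) ^ 2 ∂μ ≤ ∫ ω, (Q t ω) ^ 2 ∂μ + 1
        + (2 * ∫ ω, Q t ω * G t ω ∂μ - ε * ∫ ω, Q t ω ∂μ) := by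
    intro t ht
    have hQbt := hQb t ht
    have hQi := hQint t ht
    have hQ2i : Integrable (fun ω => (Q t ω) ^ 2) μ := by
      refine hint _ ((t : ℝ) ^ 2) ((hQm t).pow_const 2) ?_
      filter_upwards [hQbt] with ω h
      rw [abs_pow]
      exact pow_le_pow_left₀ (abs_nonneg _) h 2
    have hQAi : Integrable (fun ω => Q t ω * A t ω) μ := by
      refine hint _ ((t : ℝ) * 1) ((hQm t).mul (hAmeas t)) ?_
      filter_upwards [hQbt, hAb t] with ω h1 h2
      rw [abs_mul]
      exact mul_le_mul h1 h2 (abs_nonneg _) (by positivity)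
    have hQSi : Integrable (fun ω => Q t ω * Serv t ω) μ := by
      refine hint _ ((t : ℝ) * 1) ((hQm t).mul (hSmeas t)) ?_
      filter_upwards [hQbt, hSb t] with ω h1 h2
      rw [abs_mul]
      exact mul_le_mul h1 h2 (abs_nonneg _) (by positivity)
    have hASi : Integrable (fun ω => (A t ω - Serv t ω) ^ 2) μ := by
      refine hint _ 1 (((hAmeas t).sub (hSmeas t)).pow_const 2) ?_
      filter_upwards [hA01 t, hS01 t] with ω h1 h2
      rcases h1 with h1 | h1 <;> rcases h2 with h2 | h2 <;> rw [h1, h2] <;> norm_num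
    have hexp : ∫ ω, (Q (t + 1) ω) ^ 2 ∂μ
        = ∫ ω, (Q t ω) ^ 2 ∂μ + ((∫ ω, Q t ω * A t ω ∂μ - ∫ ω, Q t ω * Serv t ω ∂μ) * 2
          + ∫ ω, (A t ω - Serv t ω) ^ 2 ∂μ) := by
      have e : (fun ω => (Q (t + 1) ω) ^ 2)
          = fun ω => (Q t ω) ^ 2 + ((Q t ω * A t ω - Q t ω * Serv t ω) * 2
            + (A t ω - Serv t ω) ^ 2) := by
        funext ω; rw [hQdyn]; ring
      have i1 : Integrable (fun ω => (Q t ω * A t ω - Q t ω * Serv t ω) * 2) μ :=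
        (hQAi.sub hQSi).mul_const 2
      have i2 : Integrable (fun ω => (Q t ω * A t ω - Q t ω * Serv t ω) * 2
          + (A t ω - Serv t ω) ^ 2) μ := i1.add hASi
      rw [e, integral_add hQ2i i2, integral_add i1 hASi,
        show (∫ ω, (Q t ω * A t ω - Q t ω * Serv t ω) * 2 ∂μ)
          = (∫ ω, Q t ω * A t ω - Q t ω * Serv t ω ∂μ) * 2 from integral_mul_const 2 _,
        integral_sub hQAi hQSi]
    have hb1 : ∫ ω, (A t ω - Serv t ω) ^ 2 ∂μ ≤ 1 := by
      calc ∫ ω, (A t ω - Serv t ω) ^ 2 ∂μ ≤ ∫ _, (1 : ℝ) ∂μ := by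
            refine integral_mono_ae hASi (integrable_const 1) ?_
            filter_upwards [hA01 t, hS01 t] with ω h1 h2
            rcases h1 with h1 | h1 <;> rcases h2 with h2 | h2 <;> rw [h1, h2] <;> norm_num
        _ = 1 := by simp
    have hQA : ∫ ω, Q t ω * A t ω ∂μ = ∫ ω, Q t ω * lam ∂μ :=
      pull t (t : ℝ) (Q t) (A t) (fun _ => lam) (hQad t).stronglyMeasurable hQbt (hAmeas t) (hAb t) (hAcond t)
    have hQS : ∫ ω, Q t ω * Serv t ω ∂μ = ∫ ω, Q t ω * (J t ω).elim 0 μs ∂μ :=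
      pull t (t : ℝ) (Q t) (Serv t) _ (hQad t).stronglyMeasurable hQbt (hSmeas t) (hSb t) (hScond t)
    have hQli : Integrable (fun ω => Q t ω * lam) μ := hQi.mul_const lam
    have hQgi : Integrable (fun ω => Q t ω * (J t ω).elim 0 μs) μ := by
      refine hint _ ((t : ℝ) * 2) ((hQm t).mul (hgm t)) ?_
      filter_upwards [hQbt] with ω h
      rw [abs_mul]
      refine mul_le_mul h ?_ (abs_nonneg _) (by positivity)
      rw [abs_of_nonneg (hg0 t ω)]
      have := hg0 t ω
      have : (J t ω).elim 0 μs ≤ lam + ε := by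
        cases hJ : J t ω with
        | none => simp; linarith
        | some k => simpa using hmaxle k
      linarith [hε.2]
    have hQGi' := hQGi t ht
    have hdrift : ∫ ω, Q t ω * lam ∂μ - ∫ ω, Q t ω * (J t ω).elim 0 μs ∂μ
        ≤ ∫ ω, Q t ω * G t ω ∂μ - (ε / 2) * ∫ ω, Q t ω ∂μ := by
      have i3 : Integrable (fun ω => Q t ω * lam - Q t ω * (J t ω).elim 0 μs) μ := hQli.sub hQgi
      have i4 : Integrable (fun ω => ε / 2 * Q t ω) μ := hQi.const_mul (ε / 2)
      have i5 : Integrable (fun ω => Q t ω * G t ω - ε / 2 * Q t ω) μ := hQGi'.sub i4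
      rw [← integral_sub hQli hQgi,
        show ((ε / 2) * ∫ ω, Q t ω ∂μ) = ∫ ω, ε / 2 * Q t ω ∂μ from (integral_const_mul _ _).symm,
        ← integral_sub hQGi' i4]
      refine integral_mono_ae i3 i5 ?_
      filter_upwards [hnat] with ω hω
      obtain ⟨n, hn, -⟩ := hω t ht
      rcases Nat.eq_zero_or_pos n with h0 | h1
      · have hq0 : Q t ω = 0 := by rw [hn, h0]; norm_num
        simp [hq0]
      · have hq1 : (1 : ℝ) ≤ Q t ω := by rw [hn]; exact_mod_cast h1
        have hqnn : 0 ≤ Q t ω := le_trans zero_le_one hq1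
        have hGt : G t ω = max (lam + ε - (J t ω).elim 0 μs - ε / 2) 0 := by
          rw [hGdef]; simp only [if_pos hq1, mul_one]
        have hge : lam - (J t ω).elim 0 μs ≤ G t ω - ε / 2 := by
          rw [hGt]
          have := le_max_left (lam + ε - (J t ω).elim 0 μs - ε / 2) 0
          linarith
        nlinarith [mul_le_mul_of_nonneg_left hge hqnn]
    rw [hexp, hQA, hQS]
    linarith [hb1, hdrift]
  -- telescoping
  have tel : ∀ t, 1 ≤ t → ∫ ω, (Q (t + 1) ω) ^ 2 ∂μ
      ≤ (t : ℝ) + ∑ r ∈ Finset.Icc 1 t, (2 * ∫ ω, Q r ω * G r ω ∂μ - ε * ∫ ω, Q r ω ∂μ) := by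
    intro t
    induction t with
    | zero => intro h; exact absurd h (by omega)
    | succ t ih =>
      intro _
      rcases Nat.eq_zero_or_pos t with h0 | h1
      · subst h0
        have h := step 1 le_rfl
        have hQ10 : ∫ ω, (Q 1 ω) ^ 2 ∂μ = 0 := by simp [hQ1]
        rw [hQ10] at h
        rw [show Finset.Icc 1 1 = {1} from rfl, Finset.sum_singleton]
        push_cast
        linarith
      · have h := step (t + 1) (by omega)
        have h2 := ih h1
        rw [Finset.sum_Icc_succ_top (by omega : 1 ≤ t + 1)]
        push_cast
        push_cast at h2
        linarith
  -- key drift-sum inequality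
  have hkey : ε * ∑ t ∈ Finset.Icc 1 T, ∫ ω, Q t ω ∂μ
      ≤ (T : ℝ) + 2 * ∑ t ∈ Finset.Icc 1 T, ∫ ω, Q t ω * G t ω ∂μ := by
    have h := tel T hT
    have h0 : 0 ≤ ∫ ω, (Q (T + 1) ω) ^ 2 ∂μ := integral_nonneg fun ω => sq_nonneg _
    have hsplit : ∑ t ∈ Finset.Icc 1 T, (2 * ∫ ω, Q t ω * G t ω ∂μ - ε * ∫ ω, Q t ω ∂μ)
        = 2 * ∑ t ∈ Finset.Icc 1 T, ∫ ω, Q t ω * G t ω ∂μ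
          - ε * ∑ t ∈ Finset.Icc 1 T, ∫ ω, Q t ω ∂μ := by
      rw [Finset.sum_sub_distrib, ← Finset.mul_sum, ← Finset.mul_sum]
    rw [hsplit] at h
    linarith
  -- pathwise regenerate-stage inequality
  have hpath : ∀ᵐ ω ∂μ, 2 * ∑ t ∈ Finset.Icc 1 T, Q t ω * G t ω
      ≤ (ε / 2) * ∑ t ∈ Finset.Icc 1 T, Q t ω
        + (4 / ε) * (∑ t ∈ Finset.Icc 1 T, G t ω) ^ 2 := by
    filter_upwards [hnat, hinc] with ω hn hi
    obtain ⟨s, hsmem, hsmax⟩ := Finset.exists_max_image (Finset.Icc 1 T)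
      (fun t => Q t ω) ⟨1, Finset.mem_Icc.mpr ⟨le_rfl, hT⟩⟩
    obtain ⟨hs1, hsT⟩ := Finset.mem_Icc.mp hsmem
    obtain ⟨m, hm, hmb⟩ := hn s hs1
    have hSnn : 0 ≤ ∑ t ∈ Finset.Icc 1 T, G t ω := Finset.sum_nonneg fun t _ => hG0 t ω
    have hQnn' : ∀ t, 1 ≤ t → 0 ≤ Q t ω := by
      intro t ht
      obtain ⟨k, hk, -⟩ := hn t ht
      rw [hk]; positivity
    have h1 : ∑ t ∈ Finset.Icc 1 T, Q t ω * G t ω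
        ≤ Q s ω * ∑ t ∈ Finset.Icc 1 T, G t ω := by
      rw [Finset.mul_sum]
      exact Finset.sum_le_sum fun t htm => mul_le_mul_of_nonneg_right (hsmax t htm) (hG0 t ω)
    have hms : m ≤ s := by
      have hcast : (m : ℝ) ≤ (s : ℝ) := by linarith
      exact_mod_cast hcast
    have hlb := aux_sum_lb (fun t => Q t ω) (fun t _ => by linarith [hi t])
      (fun t ht => hQnn' t ht) m s hs1 hms (le_of_eq hm.symm)
    have hsub : ∑ t ∈ Finset.Icc 1 s, Q t ω ≤ ∑ t ∈ Finset.Icc 1 T, Q t ω :=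
      Finset.sum_le_sum_of_subset_of_nonneg (Finset.Icc_subset_Icc_right hsT)
        (fun t htm _ => hQnn' t (Finset.mem_Icc.mp htm).1)
    have hM2 : (Q s ω) ^ 2 ≤ 2 * ∑ t ∈ Finset.Icc 1 T, Q t ω := by
      rw [hm]
      have hm0 : (0 : ℝ) ≤ (m : ℝ) := Nat.cast_nonneg m
      nlinarith [hlb, hsub]
    have hAM : 2 * (Q s ω * ∑ t ∈ Finset.Icc 1 T, G t ω)
        ≤ (ε / 4) * (Q s ω) ^ 2 + (4 / ε) * (∑ t ∈ Finset.Icc 1 T, G t ω) ^ 2 := by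
      have key : 0 ≤ (ε / 4) * (Q s ω) ^ 2 - 2 * (Q s ω * ∑ t ∈ Finset.Icc 1 T, G t ω)
          + (4 / ε) * (∑ t ∈ Finset.Icc 1 T, G t ω) ^ 2 := by
        have hid : (ε / 4) * (Q s ω) ^ 2 - 2 * (Q s ω * ∑ t ∈ Finset.Icc 1 T, G t ω)
            + (4 / ε) * (∑ t ∈ Finset.Icc 1 T, G t ω) ^ 2
            = (ε * Q s ω - 4 * ∑ t ∈ Finset.Icc 1 T, G t ω) ^ 2 / (4 * ε) := by
          field_simp
          ring
        rw [hid]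
        positivity
      linarith
    have hstep2 : (ε / 4) * (Q s ω) ^ 2 ≤ (ε / 2) * ∑ t ∈ Finset.Icc 1 T, Q t ω := by
      nlinarith [hM2]
    linarith
  -- integrate the pathwise inequality
  have hQsum_i : Integrable (fun ω => ∑ t ∈ Finset.Icc 1 T, Q t ω) μ :=
    integrable_finset_sum _ fun t htm => hQint t (Finset.mem_Icc.mp htm).1
  have hQGsum_i : Integrable (fun ω => ∑ t ∈ Finset.Icc 1 T, Q t ω * G t ω) μ :=
    integrable_finset_sum _ fun t htm => hQGi t (Finset.mem_Icc.mp htm).1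
  have hSaR_i : Integrable (fun ω => (∑ t ∈ Finset.Icc 1 T, G t ω) ^ 2) μ := by
    refine hint _ ((2 * T) ^ 2) ((Finset.measurable_sum _ fun t _ => hGm t).pow_const 2) ?_
    refine Filter.Eventually.of_forall fun ω => ?_
    have habs : |∑ t ∈ Finset.Icc 1 T, G t ω| ≤ 2 * T := by
      calc |∑ t ∈ Finset.Icc 1 T, G t ω| ≤ ∑ t ∈ Finset.Icc 1 T, |G t ω| :=
            Finset.abs_sum_le_sum_abs _ _
        _ ≤ ∑ _t ∈ Finset.Icc 1 T, (2 : ℝ) := by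
            refine Finset.sum_le_sum fun t _ => ?_
            rw [abs_of_nonneg (hG0 t ω)]
            exact hGb t ω
        _ = 2 * T := by
            rw [Finset.sum_const, Nat.card_Icc]
            simp [nsmul_eq_mul]
            ring
    rw [abs_pow]
    exact pow_le_pow_left₀ (abs_nonneg _) habs 2
  have hintineq : 2 * ∑ t ∈ Finset.Icc 1 T, ∫ ω, Q t ω * G t ω ∂μ
      ≤ (ε / 2) * ∑ t ∈ Finset.Icc 1 T, ∫ ω, Q t ω ∂μ
        + (4 / ε) * ∫ ω, (∑ t ∈ Finset.Icc 1 T, G t ω) ^ 2 ∂μ := by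
    have e1 : ∑ t ∈ Finset.Icc 1 T, ∫ ω, Q t ω * G t ω ∂μ
        = ∫ ω, ∑ t ∈ Finset.Icc 1 T, Q t ω * G t ω ∂μ :=
      (integral_finset_sum _ fun t htm => hQGi t (Finset.mem_Icc.mp htm).1).symm
    have e2 : ∑ t ∈ Finset.Icc 1 T, ∫ ω, Q t ω ∂μ
        = ∫ ω, ∑ t ∈ Finset.Icc 1 T, Q t ω ∂μ :=
      (integral_finset_sum _ fun t htm => hQint t (Finset.mem_Icc.mp htm).1).symm
    rw [e1, e2, ← integral_const_mul, ← integral_const_mul, ← integral_const_mul,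
      ← integral_add (hQsum_i.const_mul _) (hSaR_i.const_mul _)]
    exact integral_mono_ae (hQGsum_i.const_mul 2)
      ((hQsum_i.const_mul _).add (hSaR_i.const_mul _)) hpath
  -- final arithmetic
  set S := ∑ t ∈ Finset.Icc 1 T, ∫ ω, Q t ω ∂μ with hS
  have hRnn : 0 ≤ ∫ ω, (∑ t ∈ Finset.Icc 1 T, G t ω) ^ 2 ∂μ :=
    integral_nonneg fun ω => sq_nonneg _
  have hST : ε / 2 * S ≤ (T : ℝ) + 4 / ε * ∫ ω, (∑ t ∈ Finset.Icc 1 T, G t ω) ^ 2 ∂μ := by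
    linarith
  have hT0 : (0 : ℝ) < T := by
    exact_mod_cast Nat.pos_of_ne_zero (by omega)
  have hfinal := final_arith ε (T : ℝ) S (∫ ω, (∑ t ∈ Finset.Icc 1 T, G t ω) ^ 2 ∂μ)
    hε0 hT0 hRnn hST
  calc 1 / (T : ℝ) * S ≤ 4 / ε + 8 / ε ^ 2 *
        (∫ ω, (∑ t ∈ Finset.Icc 1 T, G t ω) ^ 2 ∂μ) / T := hfinal
    _ = 4 / ε + (8 / ε ^ 2) *
        (∫ ω, (∑ t ∈ Finset.Icc 1 T,
          max (lam + ε - (J t ω).elim 0 μs - ε / 2) 0 *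
            (if 1 ≤ Q t ω then (1 : ℝ) else 0)) ^ 2 ∂μ) / T := by rw [hGdef]
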